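/- (Proposition 4.2, NN-case, lower part.) Fix an integer θ with −M < θ ≤ N and a real γ ∈ (0, 1), and define u⁻_n = u_{n−1} for −M+1 ≤ n ≤ θ, u⁺_n = u_n for θ ≤ n ≤ N; v⁻_n = v_n for −M+1 ≤ n ≤ θ−1, v⁻_θ = γ^(1−p)·v_θ; v⁺_θ = (1−γ)^(1−p)·v_θ, v⁺_n = v_n for θ+1 ≤ n ≤ N. Let A⁻ be the supremum over all not-identically-zero real sequences (x_n)_{n=−M+1}^{θ+1} with x_{θ+1} = 0 of (Σ_{n=−M+1}^{θ} u⁻_n |x_n|^q)^(1/q) / (Σ_{n=−M+1}^{θ} v⁻_n |x_n − x_{n+1}|^p)^(1/p), and let A⁺ be the supremum over all not-identically-zero real sequences (x_n)_{n=θ−1}^{N} with x_{θ−1} = 0 of (Σ_{n=θ}^{N} u⁺_n |x_n|^q)^(1/q) / (Σ_{n=θ}^{N} v⁺_n |x_n − x_{n−1}|^p)^(1/p). If A ≥ 0 is a constant such that (Σ_{n=−M}^{N} u_n |x_n − m(x)|^q)^(1/q) ≤ A · (Σ_{n=−M+1}^{N} v_n |x_n − x_{n−1}|^p)^(1/p)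 holds for every real sequence (x_n)_{n=−M}^{N}, where m(x) is the unique real constant m satisfying Σ_{n=−M}^{N} u_n |x_n − m|^(q−2) (x_n − m) = 0, then A ≥ 2^(1/q − 1/p) · min(A⁻, A⁺). -/

import Mathlib

private lemma sum_shift (F : ℤ → ℝ) (a b : ℤ) :
    ∑ n ∈ Finset.Icc (a+1) (b+1), F n = ∑ n ∈ Finset.Icc a b, F (n+1) := by
  rw [← Finset.map_add_right_Icc a b 1, Finset.sum_map]
  rfl

private lemma abs_rpow_mul (q : ℝ) (hq : 1 < q) {t : ℝ} (ht : 0 ≤ t) :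
    |t| ^ (q-2) * t = t ^ (q-1) := by
  rcases eq_or_lt_of_le ht with h | h
  · rw [← h, abs_zero, mul_zero, Real.zero_rpow (by linarith)]
  · rw [abs_of_pos h]
    nth_rewrite 2 [← Real.rpow_one t]
    rw [← Real.rpow_add h]
    ring_nf

private lemma convex_split {p : ℝ} (hp : 1 ≤ p) {w s t : ℝ} (hw0 : 0 < w) (hw1 : w < 1)
    (hs : 0 ≤ s) (ht : 0 ≤ t) :
    (s + t) ^ p ≤ w ^ (1-p) * s ^ p + (1-w) ^ (1-p) * t ^ p := by
  have h1w : (0:ℝ) < 1 - w := by linarith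
  have key := Real.rpow_arith_mean_le_arith_mean_rpow (Finset.univ : Finset (Fin 2))
    ![w, 1-w] ![s/w, t/(1-w)] (by intro i _; fin_cases i <;> simp <;> linarith)
    (by simp [Fin.sum_univ_succ]) (by intro i _; fin_cases i <;> simp <;> positivity) hp
  simp only [Fin.sum_univ_two, Matrix.cons_val_zero, Matrix.cons_val_one,
    Matrix.head_cons] at key
  rw [mul_div_cancel₀ _ (ne_of_gt hw0), mul_div_cancel₀ _ (ne_of_gt h1w)] at key
  refine key.trans (le_of_eq ?_)
  rw [Real.div_rpow hs hw0.le, Real.div_rpow ht h1w.le,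
    Real.rpow_sub hw0, Real.rpow_sub h1w, Real.rpow_one]
  field_simp
  simp only [Real.rpow_one, pow_one]
  ring

private lemma telescope_down (f : ℤ → ℝ) (a b : ℤ) (hb : f (b+1) = 0)
    (h : ∀ n ∈ Finset.Icc a b, f n = f (n+1)) : ∀ n ∈ Finset.Icc a (b+1), f n = 0 := by
  have key : ∀ k : ℕ, ∀ n : ℤ, n = b + 1 - k → a ≤ n → f n = 0 := by
    intro k
    induction k with
    | zero => intro n hn _; simpa [hn]
    | succ k ih =>
      intro n hn ha
      have hmem : n ∈ Finset.Icc a b := by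
        rw [Finset.mem_Icc]; constructor; · exact ha
        · omega
      rw [h n hmem]
      exact ih (n+1) (by omega) (by omega)
  intro n hn
  rw [Finset.mem_Icc] at hn
  exact key (b + 1 - n).toNat n (by omega) hn.1

private lemma telescope_up (f : ℤ → ℝ) (a b : ℤ) (ha : f (a-1) = 0)
    (h : ∀ n ∈ Finset.Icc a b, f n = f (n-1)) : ∀ n ∈ Finset.Icc (a-1) b, f n = 0 := by
  have key : ∀ k : ℕ, ∀ n : ℤ, n = a - 1 + k → n ≤ b → f n = 0 := by
    intro k
    induction k with
    | zero => intro n hn _; simpa [hn]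
    | succ k ih =>
      intro n hn hb2
      have hmem : n ∈ Finset.Icc a b := by
        rw [Finset.mem_Icc]; constructor; · omega
        · exact hb2
      rw [h n hmem]
      exact ih (n-1) (by omega) (by omega)
  intro n hn
  rw [Finset.mem_Icc] at hn
  exact key (n - (a-1)).toNat n (by omega) hn.2
private lemma refine_seq (q p r : ℝ) (hq : 0 < q) (hp : 0 < p) (hr : 0 < r)
    (S : Finset ℤ) (U V : ℤ → ℝ) (hU : ∀ n ∈ S, 0 < U n) (hV : ∀ n ∈ S, 0 < V n)
    (e : ℤ) (d : ℤ → ℤ)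
    (x : ℤ → ℝ) (hxe : x e = 0)
    (hzero : ∀ f : ℤ → ℝ, f e = 0 → (∀ n ∈ S, f n = f (d n)) → ∀ n ∈ S, f n = 0)
    (hx : r < (∑ n ∈ S, U n * |x n| ^ q) ^ (1/q) /
        (∑ n ∈ S, V n * |x n - x (d n)| ^ p) ^ (1/p)) :
    ∃ f : ℤ → ℝ, (∀ n, 0 ≤ f n) ∧ f e = 0 ∧
      0 < ∑ n ∈ S, V n * |f n - f (d n)| ^ p ∧
      r * (∑ n ∈ S, V n * |f n - f (d n)| ^ p) ^ (1/p) <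
        (∑ n ∈ S, U n * f n ^ q) ^ (1/q) := by
  refine ⟨fun n => |x n|, fun n => abs_nonneg _, by simp [hxe], ?_, ?_⟩
  all_goals {
  beta_reduce
  have hf0 : ∀ n : ℤ, (0:ℝ) ≤ |x n| := fun n => abs_nonneg _
  set Dor := ∑ n ∈ S, V n * |x n - x (d n)| ^ p with hDor_def
  set Df := ∑ n ∈ S, V n * |(|x n| - |x (d n)|)| ^ p with hDf_def
  set Sn := ∑ n ∈ S, U n * |x n| ^ q with hSn_def
  have hDf_nonneg : 0 ≤ Df :=
    Finset.sum_nonneg fun n hn => mul_nonneg (hV n hn).le (Real.rpow_nonneg (abs_nonneg _) _)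
  have hD_le : Df ≤ Dor := by
    refine Finset.sum_le_sum fun n hn => ?_
    exact mul_le_mul_of_nonneg_left
      (Real.rpow_le_rpow (abs_nonneg _) (abs_abs_sub_abs_le_abs_sub _ _) hp.le) (hV n hn).le
  have hDor_pos : 0 < Dor ^ (1/p) := by
    rcases lt_or_ge 0 (Dor ^ (1/p)) with h | h
    · exact h
    · exfalso
      have h0 : Dor ^ (1/p) = 0 :=
        le_antisymm h (Real.rpow_nonneg (le_trans hDf_nonneg hD_le) _)
      rw [h0, div_zero] at hx
      linarith
  have hmain : r * Dor ^ (1/p) < Sn ^ (1/q) := (lt_div_iff₀ hDor_pos).1 hx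
  have hmain2 : r * Df ^ (1/p) < Sn ^ (1/q) := by
    refine lt_of_le_of_lt ?_ hmain
    exact mul_le_mul_of_nonneg_left (Real.rpow_le_rpow hDf_nonneg hD_le (by positivity)) hr.le
  have hDf_pos : 0 < Df := by
    rcases lt_or_ge 0 Df with h | h
    · exact h
    · exfalso
      have hDf0 : Df = 0 := le_antisymm h hDf_nonneg
      have hterm := (Finset.sum_eq_zero_iff_of_nonneg
        (fun n hn => mul_nonneg (hV n hn).le (Real.rpow_nonneg (abs_nonneg _) _))).1 hDf0
      have heq : ∀ n ∈ S, |x n| = |x (d n)| := by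
        intro n hn
        have h1 := hterm n hn
        have h2 : |(|x n| - |x (d n)|)| ^ p = 0 := by
          rcases mul_eq_zero.1 h1 with h | h
          · exact absurd h (ne_of_gt (hV n hn))
          · exact h
        have h3 : |(|x n| - |x (d n)|)| = 0 := by
          by_contra hc
          have : (0:ℝ) < |(|x n| - |x (d n)|)| := lt_of_le_of_ne (abs_nonneg _) (Ne.symm hc)
          exact absurd h2 (ne_of_gt (Real.rpow_pos_of_pos this p))
        have := abs_eq_zero.1 h3
        linarith [this]
      have hzero' : ∀ n ∈ S, |x n| = 0 := hzero (fun n => |x n|) (by simp [hxe]) heq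
      have hSn0 : Sn = 0 := by
        rw [hSn_def]
        refine Finset.sum_eq_zero fun n hn => ?_
        rw [hzero' n hn, Real.zero_rpow (ne_of_gt hq), mul_zero]
      rw [hDf0, Real.zero_rpow (by positivity : (1:ℝ)/p ≠ 0), mul_zero, hSn0,
        Real.zero_rpow (by positivity : (1:ℝ)/q ≠ 0)] at hmain2
      linarith
  first
  | exact hDf_pos
  | exact hmain2 }
set_option maxHeartbeats 1000000 in
/-- Proposition 4.2, NN-case, lower part.  `Aneg` and `Apos` are the suprema of the
corresponding Rayleigh-type quotients over not-identically-zero sequences, and in the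
hypothesis `hineq`, `m` ranges over the (unique) generalized mean of `x` with respect to `u`,
characterized by `∑ u_n |x_n - m|^(q-2) (x_n - m) = 0`. -/
theorem nn_split_lower (p q : ℝ) (hp : 1 < p) (hpq : p ≤ q)
    (M N : ℤ) (hMN : -M < N)
    (u v : ℤ → ℝ)
    (hu : ∀ n ∈ Finset.Icc (-M) N, 0 < u n)
    (hv : ∀ n ∈ Finset.Icc (-M) N, 0 < v n)
    (θ : ℤ) (hθ1 : -M < θ) (hθ2 : θ ≤ N)
    (γ : ℝ) (hγ : γ ∈ Set.Ioo (0:ℝ) 1)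
    (uminus uplus vminus vplus : ℤ → ℝ)
    (hum : ∀ n ∈ Finset.Icc (-M+1) θ, uminus n = u (n-1))
    (hup : ∀ n ∈ Finset.Icc θ N, uplus n = u n)
    (hvm : ∀ n ∈ Finset.Icc (-M+1) (θ-1), vminus n = v n)
    (hvmθ : vminus θ = γ ^ (1-p) * v θ)
    (hvpθ : vplus θ = (1-γ) ^ (1-p) * v θ)
    (hvp : ∀ n ∈ Finset.Icc (θ+1) N, vplus n = v n)
    (Aneg Apos : ℝ)
    (hAneg : Aneg = ⨆ x : {x : ℤ → ℝ //
        x (θ+1) = 0 ∧ ¬ ∀ n ∈ Finset.Icc (-M+1) (θ+1), x n = 0},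
      (∑ n ∈ Finset.Icc (-M+1) θ, uminus n * |x.1 n| ^ q) ^ (1/q) /
        (∑ n ∈ Finset.Icc (-M+1) θ, vminus n * |x.1 n - x.1 (n+1)| ^ p) ^ (1/p))
    (hApos : Apos = ⨆ x : {x : ℤ → ℝ //
        x (θ-1) = 0 ∧ ¬ ∀ n ∈ Finset.Icc (θ-1) N, x n = 0},
      (∑ n ∈ Finset.Icc θ N, uplus n * |x.1 n| ^ q) ^ (1/q) /
        (∑ n ∈ Finset.Icc θ N, vplus n * |x.1 n - x.1 (n-1)| ^ p) ^ (1/p))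
    (A : ℝ) (hA : 0 ≤ A)
    (hineq : ∀ x : ℤ → ℝ, ∀ m : ℝ,
      (∑ n ∈ Finset.Icc (-M) N, u n * |x n - m| ^ (q-2) * (x n - m) = 0) →
      (∑ n ∈ Finset.Icc (-M) N, u n * |x n - m| ^ q) ^ (1/q) ≤
        A * (∑ n ∈ Finset.Icc (-M+1) N, v n * |x n - x (n-1)| ^ p) ^ (1/p)) :
    (2:ℝ) ^ (1/q - 1/p) * min Aneg Apos ≤ A := by
  obtain ⟨hγ0, hγ1⟩ := hγ
  have hq : 1 < q := lt_of_lt_of_le hp hpq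
  have hp0 : (0:ℝ) < p := by linarith
  have hq0 : (0:ℝ) < q := by linarith
  have hqne : q ≠ 0 := ne_of_gt hq0
  have hpne : p ≠ 0 := ne_of_gt hp0
  have hq1ne : q - 1 ≠ 0 := by intro h; rw [sub_eq_zero] at h; linarith
  have h2pos : (0:ℝ) < (2:ℝ) ^ (1/q - 1/p) := Real.rpow_pos_of_pos two_pos _
  -- weight positivity
  have humpos : ∀ n ∈ Finset.Icc (-M+1) θ, 0 < uminus n := by
    intro n hn
    rw [hum n hn]
    rw [Finset.mem_Icc] at hn
    exact hu _ (Finset.mem_Icc.2 ⟨by omega, by omega⟩)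
  have huppos : ∀ n ∈ Finset.Icc θ N, 0 < uplus n := by
    intro n hn
    rw [hup n hn]
    rw [Finset.mem_Icc] at hn
    exact hu _ (Finset.mem_Icc.2 ⟨by omega, by omega⟩)
  have hvθpos : 0 < v θ := hv _ (Finset.mem_Icc.2 ⟨by omega, by omega⟩)
  have hvmpos : ∀ n ∈ Finset.Icc (-M+1) θ, 0 < vminus n := by
    intro n hn
    rw [Finset.mem_Icc] at hn
    rcases eq_or_lt_of_le hn.2 with h | h
    · rw [h, hvmθ]
      exact mul_pos (Real.rpow_pos_of_pos hγ0 _) hvθpos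
    · rw [hvm n (Finset.mem_Icc.2 ⟨hn.1, by omega⟩)]
      exact hv _ (Finset.mem_Icc.2 ⟨by omega, by omega⟩)
  have hvppos : ∀ n ∈ Finset.Icc θ N, 0 < vplus n := by
    intro n hn
    rw [Finset.mem_Icc] at hn
    rcases eq_or_lt_of_le hn.1 with h | h
    · rw [← h, hvpθ]
      exact mul_pos (Real.rpow_pos_of_pos (by linarith) _) hvθpos
    · rw [hvp n (Finset.mem_Icc.2 ⟨by omega, hn.2⟩)]
      exact hv _ (Finset.mem_Icc.2 ⟨by omega, by omega⟩)
  have key : ∀ r : ℝ, 0 < r → r < min Aneg Apos → (2:ℝ) ^ (1/q - 1/p) * r ≤ A := by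
    intro r hr hrmin
    have hrA : r < Aneg := lt_of_lt_of_le hrmin (min_le_left _ _)
    have hrB : r < Apos := lt_of_lt_of_le hrmin (min_le_right _ _)
    rw [hAneg] at hrA
    rw [hApos] at hrB
    haveI hne1 : Nonempty {x : ℤ → ℝ //
        x (θ+1) = 0 ∧ ¬ ∀ n ∈ Finset.Icc (-M+1) (θ+1), x n = 0} := by
      by_contra hc
      rw [not_nonempty_iff] at hc
      rw [Real.iSup_of_isEmpty] at hrA
      linarith
    haveI hne2 : Nonempty {x : ℤ → ℝ //
        x (θ-1) = 0 ∧ ¬ ∀ n ∈ Finset.Icc (θ-1) N, x n = 0} := by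
      by_contra hc
      rw [not_nonempty_iff] at hc
      rw [Real.iSup_of_isEmpty] at hrB
      linarith
    obtain ⟨x1, hx1⟩ := exists_lt_of_lt_ciSup hrA
    obtain ⟨x2, hx2⟩ := exists_lt_of_lt_ciSup hrB
    obtain ⟨f, hf0, hfe, hDm_pos, hSm⟩ := refine_seq q p r hq0 hp0 hr
      (Finset.Icc (-M+1) θ) uminus vminus humpos hvmpos (θ+1) (fun n => n+1)
      x1.1 x1.2.1
      (fun f hfe hstep n hn => telescope_down f (-M+1) θ hfe hstep n
        (by rw [Finset.mem_Icc] at hn ⊢; omega))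
      hx1
    obtain ⟨g, hg0, hge, hDp_pos, hSp⟩ := refine_seq q p r hq0 hp0 hr
      (Finset.Icc θ N) uplus vplus huppos hvppos (θ-1) (fun n => n-1)
      x2.1 x2.2.1
      (fun f hfe hstep n hn => telescope_up f θ N hfe hstep n
        (by rw [Finset.mem_Icc] at hn ⊢; omega))
      hx2
    -- abbreviations for the four sums
    set Sm := ∑ n ∈ Finset.Icc (-M+1) θ, uminus n * f n ^ q with hSm_def
    set Dm := ∑ n ∈ Finset.Icc (-M+1) θ, vminus n * |f n - f (n+1)| ^ p with hDm_def
    set Sp := ∑ n ∈ Finset.Icc θ N, uplus n * g n ^ q with hSp_def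
    set Dp := ∑ n ∈ Finset.Icc θ N, vplus n * |g n - g (n-1)| ^ p with hDp_def
    have hSm_nonneg : 0 ≤ Sm := Finset.sum_nonneg fun n hn =>
      mul_nonneg (humpos n hn).le (Real.rpow_nonneg (hf0 n) q)
    have hSp_nonneg : 0 ≤ Sp := Finset.sum_nonneg fun n hn =>
      mul_nonneg (huppos n hn).le (Real.rpow_nonneg (hg0 n) q)
    have hSm_pos : 0 < Sm := by
      rcases lt_or_ge 0 Sm with h | h
      · exact h
      · exfalso
        have h0 : Sm = 0 := le_antisymm h hSm_nonneg
        rw [h0, Real.zero_rpow (by positivity : (1:ℝ)/q ≠ 0)] at hSm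
        have : 0 < r * Dm ^ (1/p) := mul_pos hr (Real.rpow_pos_of_pos hDm_pos _)
        linarith
    have hSp_pos : 0 < Sp := by
      rcases lt_or_ge 0 Sp with h | h
      · exact h
      · exfalso
        have h0 : Sp = 0 := le_antisymm h hSp_nonneg
        rw [h0, Real.zero_rpow (by positivity : (1:ℝ)/q ≠ 0)] at hSp
        have : 0 < r * Dp ^ (1/p) := mul_pos hr (Real.rpow_pos_of_pos hDp_pos _)
        linarith
    -- the P sums
    set Pm := ∑ n ∈ Finset.Icc (-M+1) θ, uminus n * f n ^ (q-1) with hPm_def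
    set Pp := ∑ n ∈ Finset.Icc θ N, uplus n * g n ^ (q-1) with hPp_def
    have hPm_pos : 0 < Pm := by
      have hSmne : ∑ n ∈ Finset.Icc (-M+1) θ, uminus n * f n ^ q ≠ 0 := by
        rw [← hSm_def]; exact ne_of_gt hSm_pos
      obtain ⟨n, hn, hne⟩ := Finset.exists_ne_zero_of_sum_ne_zero hSmne
      have hfn : 0 < f n := by
        rcases eq_or_lt_of_le (hf0 n) with h | h
        · exact absurd (by rw [← h, Real.zero_rpow hqne, mul_zero]) hne
        · exact h
      exact Finset.sum_pos'
        (fun i hi => mul_nonneg (humpos i hi).le (Real.rpow_nonneg (hf0 i) _))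
        ⟨n, hn, mul_pos (humpos n hn) (Real.rpow_pos_of_pos hfn _)⟩
    have hPp_pos : 0 < Pp := by
      have hSpne : ∑ n ∈ Finset.Icc θ N, uplus n * g n ^ q ≠ 0 := by
        rw [← hSp_def]; exact ne_of_gt hSp_pos
      obtain ⟨n, hn, hne⟩ := Finset.exists_ne_zero_of_sum_ne_zero hSpne
      have hgn : 0 < g n := by
        rcases eq_or_lt_of_le (hg0 n) with h | h
        · exact absurd (by rw [← h, Real.zero_rpow hqne, mul_zero]) hne
        · exact h
      exact Finset.sum_pos'
        (fun i hi => mul_nonneg (huppos i hi).le (Real.rpow_nonneg (hg0 i) _))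
        ⟨n, hn, mul_pos (huppos n hn) (Real.rpow_pos_of_pos hgn _)⟩
    set a := Pp ^ (1/(q-1)) with ha_def
    set b := Pm ^ (1/(q-1)) with hb_def
    have ha : 0 < a := Real.rpow_pos_of_pos hPp_pos _
    have hb : 0 < b := Real.rpow_pos_of_pos hPm_pos _
    have haq : a ^ (q-1) = Pp := by
      rw [ha_def, ← Real.rpow_mul hPp_pos.le, one_div_mul_cancel hq1ne, Real.rpow_one]
    have hbq : b ^ (q-1) = Pm := by
      rw [hb_def, ← Real.rpow_mul hPm_pos.le, one_div_mul_cancel hq1ne, Real.rpow_one]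
    -- the test sequence
    set y : ℤ → ℝ := fun n => if n ≤ θ-1 then a * f (n+1) else -(b * g n) with hy_def
    have hyL : ∀ n : ℤ, n ≤ θ-1 → y n = a * f (n+1) := fun n hn => if_pos hn
    have hyR : ∀ n : ℤ, θ ≤ n → y n = -(b * g n) := fun n hn => if_neg (by omega)
    -- interval splittings
    have hsplit0 : Finset.Icc (-M) N = Finset.Icc (-M) (θ-1) ∪ Finset.Icc θ N := by
      ext n; simp only [Finset.mem_Icc, Finset.mem_union]; omega
    have hdisj : Disjoint (Finset.Icc (-M) (θ-1)) (Finset.Icc θ N) := by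
      rw [Finset.disjoint_left]; intro n h1 h2
      rw [Finset.mem_Icc] at h1 h2; omega
    have hsplitJ : Finset.Icc (-M+1) N = Finset.Icc (-M+1) (θ-1) ∪ Finset.Icc θ N := by
      ext n; simp only [Finset.mem_Icc, Finset.mem_union]; omega
    have hdisjJ : Disjoint (Finset.Icc (-M+1) (θ-1)) (Finset.Icc θ N) := by
      rw [Finset.disjoint_left]; intro n h1 h2
      rw [Finset.mem_Icc] at h1 h2; omega
    have hIR : Finset.Icc θ N = insert θ (Finset.Icc (θ+1) N) := by
      ext n; simp only [Finset.mem_Icc, Finset.mem_insert]; omega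
    have hθJR : θ ∉ Finset.Icc (θ+1) N := by rw [Finset.mem_Icc]; omega
    have hLins : Finset.Icc (-M+1) θ = insert θ (Finset.Icc (-M+1) (θ-1)) := by
      ext n; simp only [Finset.mem_Icc, Finset.mem_insert]; omega
    have hθJL : θ ∉ Finset.Icc (-M+1) (θ-1) := by rw [Finset.mem_Icc]; omega
    have hshift : ∀ G : ℤ → ℝ,
        ∑ n ∈ Finset.Icc (-M+1) θ, G n = ∑ n ∈ Finset.Icc (-M) (θ-1), G (n+1) := by
      intro G
      have h := sum_shift G (-M) (θ-1)
      rw [show θ - 1 + 1 = θ from by ring] at h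
      exact h
    -- the mean condition
    have e1 : Pm = ∑ n ∈ Finset.Icc (-M) (θ-1), u n * f (n+1) ^ (q-1) := by
      rw [hPm_def]
      calc ∑ n ∈ Finset.Icc (-M+1) θ, uminus n * f n ^ (q-1)
          = ∑ n ∈ Finset.Icc (-M+1) θ, u (n-1) * f n ^ (q-1) :=
            Finset.sum_congr rfl fun n hn => by rw [hum n hn]
        _ = ∑ n ∈ Finset.Icc (-M) (θ-1), u (n+1-1) * f (n+1) ^ (q-1) :=
            hshift fun n => u (n-1) * f n ^ (q-1)
        _ = ∑ n ∈ Finset.Icc (-M) (θ-1), u n * f (n+1) ^ (q-1) := by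
            simp only [add_sub_cancel_right]
    have e2 : Sm = ∑ n ∈ Finset.Icc (-M) (θ-1), u n * f (n+1) ^ q := by
      rw [hSm_def]
      calc ∑ n ∈ Finset.Icc (-M+1) θ, uminus n * f n ^ q
          = ∑ n ∈ Finset.Icc (-M+1) θ, u (n-1) * f n ^ q :=
            Finset.sum_congr rfl fun n hn => by rw [hum n hn]
        _ = ∑ n ∈ Finset.Icc (-M) (θ-1), u (n+1-1) * f (n+1) ^ q :=
            hshift fun n => u (n-1) * f n ^ q
        _ = ∑ n ∈ Finset.Icc (-M) (θ-1), u n * f (n+1) ^ q := by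
            simp only [add_sub_cancel_right]
    have hmeanL : ∑ n ∈ Finset.Icc (-M) (θ-1), u n * |y n - 0| ^ (q-2) * (y n - 0)
        = Pp * Pm := by
      calc ∑ n ∈ Finset.Icc (-M) (θ-1), u n * |y n - 0| ^ (q-2) * (y n - 0)
          = ∑ n ∈ Finset.Icc (-M) (θ-1), a ^ (q-1) * (u n * f (n+1) ^ (q-1)) := by
            refine Finset.sum_congr rfl fun n hn => ?_
            rw [Finset.mem_Icc] at hn
            rw [sub_zero, hyL n (by omega)]
            have ht : (0:ℝ) ≤ a * f (n+1) := mul_nonneg ha.le (hf0 _)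
            rw [mul_assoc, abs_rpow_mul q hq ht, Real.mul_rpow ha.le (hf0 _)]
            ring
        _ = a ^ (q-1) * ∑ n ∈ Finset.Icc (-M) (θ-1), u n * f (n+1) ^ (q-1) :=
            (Finset.mul_sum _ _ _).symm
        _ = Pp * Pm := by rw [haq, ← e1]
    have hmeanR : ∑ n ∈ Finset.Icc θ N, u n * |y n - 0| ^ (q-2) * (y n - 0)
        = -(b ^ (q-1) * Pp) := by
      calc ∑ n ∈ Finset.Icc θ N, u n * |y n - 0| ^ (q-2) * (y n - 0)
          = ∑ n ∈ Finset.Icc θ N, -(b ^ (q-1) * (uplus n * g n ^ (q-1))) := by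
            refine Finset.sum_congr rfl fun n hn => ?_
            have hn' := Finset.mem_Icc.1 hn
            rw [sub_zero, hyR n (by omega), hup n hn]
            have ht : (0:ℝ) ≤ b * g n := mul_nonneg hb.le (hg0 _)
            have hkey := abs_rpow_mul q hq ht
            calc u n * |-(b * g n)| ^ (q-2) * -(b * g n)
                = -(u n * (|b * g n| ^ (q-2) * (b * g n))) := by rw [abs_neg]; ring
              _ = -(u n * (b * g n) ^ (q-1)) := by rw [hkey]
              _ = -(b ^ (q-1) * (u n * g n ^ (q-1))) := by
                  rw [Real.mul_rpow hb.le (hg0 _)]; ring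
        _ = -(∑ n ∈ Finset.Icc θ N, b ^ (q-1) * (uplus n * g n ^ (q-1))) := by
            rw [Finset.sum_neg_distrib]
        _ = -(b ^ (q-1) * Pp) := by rw [← Finset.mul_sum, hPp_def]
    have hmean : ∑ n ∈ Finset.Icc (-M) N, u n * |y n - 0| ^ (q-2) * (y n - 0) = 0 := by
      rw [hsplit0, Finset.sum_union hdisj, hmeanL, hmeanR, hbq]
      ring
    -- value of numerator
    have hval : ∑ n ∈ Finset.Icc (-M) N, u n * |y n - 0| ^ q = a^q * Sm + b^q * Sp := by
      rw [hsplit0, Finset.sum_union hdisj]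
      have hA1 : ∑ n ∈ Finset.Icc (-M) (θ-1), u n * |y n - 0| ^ q = a^q * Sm := by
        calc ∑ n ∈ Finset.Icc (-M) (θ-1), u n * |y n - 0| ^ q
            = ∑ n ∈ Finset.Icc (-M) (θ-1), a^q * (u n * f (n+1) ^ q) := by
              refine Finset.sum_congr rfl fun n hn => ?_
              rw [Finset.mem_Icc] at hn
              rw [sub_zero, hyL n (by omega), abs_of_nonneg (mul_nonneg ha.le (hf0 _)),
                Real.mul_rpow ha.le (hf0 _)]
              ring
          _ = a^q * ∑ n ∈ Finset.Icc (-M) (θ-1), u n * f (n+1) ^ q :=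
              (Finset.mul_sum _ _ _).symm
          _ = a^q * Sm := by rw [← e2]
      have hA2 : ∑ n ∈ Finset.Icc θ N, u n * |y n - 0| ^ q = b^q * Sp := by
        calc ∑ n ∈ Finset.Icc θ N, u n * |y n - 0| ^ q
            = ∑ n ∈ Finset.Icc θ N, b^q * (uplus n * g n ^ q) := by
              refine Finset.sum_congr rfl fun n hn => ?_
              have hn' := Finset.mem_Icc.1 hn
              rw [sub_zero, hyR n (by omega), hup n hn, abs_neg,
                abs_of_nonneg (mul_nonneg hb.le (hg0 _)), Real.mul_rpow hb.le (hg0 _)]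
              ring
          _ = b^q * ∑ n ∈ Finset.Icc θ N, uplus n * g n ^ q := (Finset.mul_sum _ _ _).symm
          _ = b^q * Sp := by rw [hSp_def]
      rw [hA1, hA2]
    -- the RHS estimate
    have hT : ∑ n ∈ Finset.Icc (-M+1) N, v n * |y n - y (n-1)| ^ p
        ≤ a^p * Dm + b^p * Dp := by
      rw [hsplitJ, Finset.sum_union hdisjJ, hIR, Finset.sum_insert hθJR]
      have hJLpart : ∑ n ∈ Finset.Icc (-M+1) (θ-1), v n * |y n - y (n-1)| ^ p
          = a^p * ∑ n ∈ Finset.Icc (-M+1) (θ-1), vminus n * |f n - f (n+1)| ^ p := by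
        rw [Finset.mul_sum]
        refine Finset.sum_congr rfl fun n hn => ?_
        have hn' := Finset.mem_Icc.1 hn
        rw [hyL n (by omega), hyL (n-1) (by omega), show n - 1 + 1 = n from by ring,
          show a * f (n+1) - a * f n = a * (f (n+1) - f n) from by ring, abs_mul,
          abs_of_pos ha, Real.mul_rpow ha.le (abs_nonneg _), abs_sub_comm, ← hvm n hn]
        ring
      have hJRpart : ∑ n ∈ Finset.Icc (θ+1) N, v n * |y n - y (n-1)| ^ p
          = b^p * ∑ n ∈ Finset.Icc (θ+1) N, vplus n * |g n - g (n-1)| ^ p := by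
        rw [Finset.mul_sum]
        refine Finset.sum_congr rfl fun n hn => ?_
        have hn' := Finset.mem_Icc.1 hn
        rw [hyR n (by omega), hyR (n-1) (by omega),
          show -(b * g n) - -(b * g (n-1)) = -(b * (g n - g (n-1))) from by ring, abs_neg,
          abs_mul, abs_of_pos hb, Real.mul_rpow hb.le (abs_nonneg _), ← hvp n hn]
        ring
      have hjunc : v θ * |y θ - y (θ-1)| ^ p
          ≤ a^p * (vminus θ * f θ ^ p) + b^p * (vplus θ * g θ ^ p) := by
        rw [hyR θ le_rfl, hyL (θ-1) (by omega), show θ - 1 + 1 = θ from by ring,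
          show -(b * g θ) - a * f θ = -(a * f θ + b * g θ) from by ring, abs_neg,
          abs_of_nonneg (add_nonneg (mul_nonneg ha.le (hf0 θ)) (mul_nonneg hb.le (hg0 θ)))]
        have hcs := convex_split hp.le hγ0 hγ1 (mul_nonneg ha.le (hf0 θ))
          (mul_nonneg hb.le (hg0 θ))
        calc v θ * (a * f θ + b * g θ) ^ p
            ≤ v θ * (γ^(1-p) * (a * f θ)^p + (1-γ)^(1-p) * (b * g θ)^p) :=
              mul_le_mul_of_nonneg_left hcs hvθpos.le
          _ = a^p * (vminus θ * f θ ^ p) + b^p * (vplus θ * g θ ^ p) := by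
              rw [hvmθ, hvpθ, Real.mul_rpow ha.le (hf0 θ), Real.mul_rpow hb.le (hg0 θ)]
              ring
      have hDm_split : Dm = vminus θ * f θ ^ p
          + ∑ n ∈ Finset.Icc (-M+1) (θ-1), vminus n * |f n - f (n+1)| ^ p := by
        rw [hDm_def, hLins, Finset.sum_insert hθJL, hfe, sub_zero, abs_of_nonneg (hf0 θ)]
      have hDp_split : Dp = vplus θ * g θ ^ p
          + ∑ n ∈ Finset.Icc (θ+1) N, vplus n * |g n - g (n-1)| ^ p := by
        rw [hDp_def, hIR, Finset.sum_insert hθJR, hge, sub_zero, abs_of_nonneg (hg0 θ)]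
      rw [hJLpart, hJRpart, hDm_split, hDp_split, mul_add, mul_add]
      linarith [hjunc]
    -- apply the main inequality
    have hstep1 := hineq y 0 hmean
    rw [hval] at hstep1
    have hT_nonneg : 0 ≤ ∑ n ∈ Finset.Icc (-M+1) N, v n * |y n - y (n-1)| ^ p := by
      refine Finset.sum_nonneg fun n hn => ?_
      have hn' := Finset.mem_Icc.1 hn
      exact mul_nonneg (hv n (Finset.mem_Icc.2 ⟨by omega, by omega⟩)).le
        (Real.rpow_nonneg (abs_nonneg _) _)
    have hstep2 : (a^q * Sm + b^q * Sp) ^ (1/q) ≤ A * (a^p * Dm + b^p * Dp) ^ (1/p) :=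
      hstep1.trans (mul_le_mul_of_nonneg_left
        (Real.rpow_le_rpow hT_nonneg hT (by positivity)) hA)
    -- lower bound for the numerator
    have hlam_pos : 0 < a^p * Dm := mul_pos (Real.rpow_pos_of_pos ha _) hDm_pos
    have hmu_pos : 0 < b^p * Dp := mul_pos (Real.rpow_pos_of_pos hb _) hDp_pos
    have hDmq : r ^ q * Dm ^ (q/p) ≤ Sm := by
      have h1 := Real.rpow_le_rpow (by positivity) hSm.le hq0.le
      rw [← Real.rpow_mul hSm_pos.le, one_div_mul_cancel hqne, Real.rpow_one,
        Real.mul_rpow hr.le (Real.rpow_nonneg hDm_pos.le _), ← Real.rpow_mul hDm_pos.le,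
        show 1/p*q = q/p from by ring] at h1
      exact h1
    have hDpq : r ^ q * Dp ^ (q/p) ≤ Sp := by
      have h1 := Real.rpow_le_rpow (by positivity) hSp.le hq0.le
      rw [← Real.rpow_mul hSp_pos.le, one_div_mul_cancel hqne, Real.rpow_one,
        Real.mul_rpow hr.le (Real.rpow_nonneg hDp_pos.le _), ← Real.rpow_mul hDp_pos.le,
        show 1/p*q = q/p from by ring] at h1
      exact h1
    have h1 : r^q * ((a^p * Dm) ^ (q/p)) ≤ a^q * Sm := by
      rw [Real.mul_rpow (Real.rpow_nonneg ha.le _) hDm_pos.le, ← Real.rpow_mul ha.le,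
        show p * (q/p) = q from by field_simp]
      calc r^q * (a^q * Dm^(q/p)) = a^q * (r^q * Dm^(q/p)) := by ring
        _ ≤ a^q * Sm := mul_le_mul_of_nonneg_left hDmq (Real.rpow_nonneg ha.le _)
    have h2 : r^q * ((b^p * Dp) ^ (q/p)) ≤ b^q * Sp := by
      rw [Real.mul_rpow (Real.rpow_nonneg hb.le _) hDp_pos.le, ← Real.rpow_mul hb.le,
        show p * (q/p) = q from by field_simp]
      calc r^q * (b^q * Dp^(q/p)) = b^q * (r^q * Dp^(q/p)) := by ring
        _ ≤ b^q * Sp := mul_le_mul_of_nonneg_left hDpq (Real.rpow_nonneg hb.le _)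
    have hqp1 : (1:ℝ) ≤ q/p := (one_le_div hp0).2 hpq
    have h3 : (2:ℝ)^(1-q/p) * ((a^p*Dm) + (b^p*Dp))^(q/p)
        ≤ (a^p*Dm)^(q/p) + (b^p*Dp)^(q/p) := by
      have hc := convex_split hqp1 (by norm_num : (0:ℝ) < 1/2)
        (by norm_num : (1:ℝ)/2 < 1) hlam_pos.le hmu_pos.le
      rw [show (1:ℝ) - 1/2 = 1/2 from by norm_num] at hc
      have h12 : ((1:ℝ)/2) ^ ((1:ℝ)-q/p) = (2:ℝ) ^ (q/p - 1) := by
        rw [show (1:ℝ)/2 = 2⁻¹ from by norm_num,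
          Real.inv_rpow (by norm_num : (0:ℝ) ≤ 2), ← Real.rpow_neg (by norm_num : (0:ℝ) ≤ 2)]
        congr 1; ring
      rw [h12] at hc
      calc (2:ℝ)^(1-q/p) * ((a^p*Dm)+(b^p*Dp))^(q/p)
          ≤ (2:ℝ)^(1-q/p) * ((2:ℝ)^(q/p-1) * ((a^p*Dm)^(q/p) + (b^p*Dp)^(q/p))) :=
            mul_le_mul_of_nonneg_left (hc.trans (le_of_eq (by ring))) (by positivity)
        _ = (a^p*Dm)^(q/p) + (b^p*Dp)^(q/p) := by
            rw [← mul_assoc, ← Real.rpow_add two_pos,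
              show (1-q/p)+(q/p-1) = 0 from by ring, Real.rpow_zero, one_mul]
    have hsum : r^q * ((2:ℝ)^(1-q/p) * ((a^p*Dm) + (b^p*Dp))^(q/p)) ≤ a^q*Sm + b^q*Sp := by
      calc r^q * ((2:ℝ)^(1-q/p) * ((a^p*Dm) + (b^p*Dp))^(q/p))
          ≤ r^q * ((a^p*Dm)^(q/p) + (b^p*Dp)^(q/p)) :=
            mul_le_mul_of_nonneg_left h3 (by positivity)
        _ = r^q * ((a^p*Dm)^(q/p)) + r^q * ((b^p*Dp)^(q/p)) := by ring
        _ ≤ a^q*Sm + b^q*Sp := add_le_add h1 h2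
    have hprod_nonneg : 0 ≤ r^q * ((2:ℝ)^(1-q/p) * ((a^p*Dm) + (b^p*Dp))^(q/p)) :=
      mul_nonneg (Real.rpow_nonneg hr.le _) (mul_nonneg
        (Real.rpow_nonneg (by norm_num) _)
        (Real.rpow_nonneg (add_pos hlam_pos hmu_pos).le _))
    have hL1 : (r^q * ((2:ℝ)^(1-q/p) * ((a^p*Dm) + (b^p*Dp))^(q/p)))^(1/q)
        ≤ A * ((a^p*Dm) + (b^p*Dp))^(1/p) :=
      (Real.rpow_le_rpow hprod_nonneg hsum (one_div_nonneg.2 hq0.le)).trans hstep2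
    have hLHS : (r^q * ((2:ℝ)^(1-q/p) * ((a^p*Dm) + (b^p*Dp))^(q/p)))^(1/q)
        = ((2:ℝ)^(1/q - 1/p) * r) * ((a^p*Dm) + (b^p*Dp))^(1/p) := by
      have e3 : q/p * (1/q) = 1/p := by
        rw [div_mul_div_comm, mul_one, mul_comm p q, ← div_div, div_self hqne]
      have e4 : (1-q/p) * (1/q) = 1/q - 1/p := by rw [sub_mul, one_mul, e3]
      have hX : (0:ℝ) ≤ (2:ℝ)^(1-q/p) := Real.rpow_nonneg (by norm_num) _
      have hsum_nonneg' : (0:ℝ) ≤ a^p*Dm + b^p*Dp := (add_pos hlam_pos hmu_pos).le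
      have hY : (0:ℝ) ≤ ((a^p*Dm) + (b^p*Dp))^(q/p) := Real.rpow_nonneg hsum_nonneg' _
      rw [Real.mul_rpow (Real.rpow_nonneg hr.le _) (mul_nonneg hX hY),
        Real.mul_rpow hX hY,
        ← Real.rpow_mul hr.le, mul_one_div_cancel hqne, Real.rpow_one,
        ← Real.rpow_mul (by norm_num : (0:ℝ) ≤ 2),
        ← Real.rpow_mul hsum_nonneg', e4, e3]
      ring
    rw [hLHS] at hL1
    have hlm : 0 < ((a^p*Dm) + (b^p*Dp))^(1/p) :=
      Real.rpow_pos_of_pos (add_pos hlam_pos hmu_pos) _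
    exact le_of_mul_le_mul_right hL1 hlm
  rcases le_or_gt (min Aneg Apos) 0 with hm | hm
  · have := mul_nonpos_of_nonneg_of_nonpos h2pos.le hm
    linarith
  · rw [mul_comm, ← le_div_iff₀ h2pos]
    refine le_of_forall_lt fun c hc => ?_
    obtain ⟨r, hcr, hrm⟩ := exists_between hc
    rcases le_or_gt r 0 with h | h
    · exact lt_of_lt_of_le (lt_of_lt_of_le hcr h) (div_nonneg hA h2pos.le)
    · have h4 := key r h hrm
      have h5 : r ≤ A / (2:ℝ) ^ (1/q - 1/p) := by
        rw [le_div_iff₀ h2pos]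
        linarith
      exact lt_of_lt_of_le hcr h5
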